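/- Let Q and Q′ be t×t positive semidefinite complex matrices and H ∈ ℂ^{t×r}. Then det(I_r + Hᴴ Q′ H) ≤ det(I_r + Hᴴ Q H) · (1 + √r · ‖Q′ − Q‖_F · ‖H‖_F²)^r. -/

import Mathlib

open Matrix
open scoped ComplexOrder

noncomputable section

/-- The Frobenius norm of a complex matrix. -/
def frob {m k : Type*} [Fintype m] [Fintype k] (A : Matrix m k ℂ) : ℝ :=
  Real.sqrt (∑ i, ∑ j, ‖A i j‖ ^ 2)

end

attribute [local instance] Matrix.frobeniusSeminormedAddCommGroup

lemma frob_eq_norm {m k : Type*} [Fintype m] [Fintype k] (A : Matrix m k ℂ) :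
    frob A = ‖A‖ := by
  rw [frob, Matrix.frobenius_norm_def, Real.sqrt_eq_rpow]
  congr 1
  refine Finset.sum_congr rfl fun i _ => Finset.sum_congr rfl fun j _ => ?_
  rw [Real.rpow_two]

lemma frob_nonneg {m k : Type*} [Fintype m] [Fintype k] (A : Matrix m k ℂ) :
    0 ≤ frob A := Real.sqrt_nonneg _

lemma frob_sq {m k : Type*} [Fintype m] [Fintype k] (A : Matrix m k ℂ) :
    frob A ^ 2 = ∑ i, ∑ j, ‖A i j‖ ^ 2 := by
  rw [frob, Real.sq_sqrt]
  positivity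

lemma frob_mul_le {m k l : Type*} [Fintype m] [Fintype k] [Fintype l]
    (A : Matrix m k ℂ) (B : Matrix k l ℂ) : frob (A * B) ≤ frob A * frob B := by
  rw [frob_eq_norm, frob_eq_norm, frob_eq_norm]
  exact Matrix.frobenius_norm_mul A B

lemma frob_conjTranspose {m k : Type*} [Fintype m] [Fintype k] (A : Matrix m k ℂ) :
    frob Aᴴ = frob A := by
  rw [frob_eq_norm, frob_eq_norm]
  exact Matrix.frobenius_norm_conjTranspose A

lemma frob_add_le {m : Type*} [Fintype m] (A B : Matrix m m ℂ) :
    frob (A + B) ≤ frob A + frob B := by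
  rw [frob_eq_norm, frob_eq_norm, frob_eq_norm]
  exact norm_add_le A B

lemma frob_one {r : ℕ} : frob (1 : Matrix (Fin r) (Fin r) ℂ) = Real.sqrt r := by
  rw [frob]
  congr 1
  have : ∀ i : Fin r, ∑ j, ‖(1 : Matrix (Fin r) (Fin r) ℂ) i j‖ ^ 2 = 1 := by
    intro i
    rw [Finset.sum_eq_single i]
    · simp [Matrix.one_apply_eq]
    · intro j _ hj
      simp [Matrix.one_apply_ne' hj]
    · simp
  simp [this]

lemma amgm {r : ℕ} (x : Fin r → ℝ) (hx : ∀ i, 0 ≤ x i) (hr : 0 < r) :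
    ∏ i, x i ≤ ((∑ i, x i) / r) ^ r := by
  have hw : ∑ _i : Fin r, (1 / r : ℝ) = 1 := by
    simp [Finset.sum_const]
    field_simp
  have h := Real.geom_mean_le_arith_mean_weighted Finset.univ (fun _ => (1 / r : ℝ)) x
    (fun i _ => by positivity) hw (fun i _ => hx i)
  have h2 : (∏ i, x i ^ (1 / r : ℝ)) ^ r = ∏ i, x i := by
    rw [← Finset.prod_pow]
    refine Finset.prod_congr rfl fun i _ => ?_
    rw [← Real.rpow_natCast (x i ^ (1/r:ℝ)) r, ← Real.rpow_mul (hx i)]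
    rw [one_div, inv_mul_cancel₀ (by exact_mod_cast hr.ne')]
    exact Real.rpow_one _
  calc ∏ i, x i = (∏ i, x i ^ (1 / r : ℝ)) ^ r := h2.symm
    _ ≤ (∑ i, (1/r:ℝ) * x i) ^ r := by
        exact pow_le_pow_left₀ (Finset.prod_nonneg fun i _ => Real.rpow_nonneg (hx i) _) h r
    _ = ((∑ i, x i) / r) ^ r := by rw [← Finset.mul_sum]; ring_nf

lemma trace_mul_conjTranspose {m k : Type*} [Fintype m] [Fintype k] (B : Matrix m k ℂ) :
    trace (B * Bᴴ) = ((frob B ^ 2 : ℝ) : ℂ) := by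
  rw [frob_sq]
  rw [trace]
  push_cast
  refine Finset.sum_congr rfl fun i _ => ?_
  rw [Matrix.diag, Matrix.mul_apply]
  push_cast
  refine Finset.sum_congr rfl fun j _ => ?_
  rw [Matrix.conjTranspose_apply, ← Complex.ofReal_pow, Complex.sq_norm]
  exact Complex.mul_conj _

lemma trace_eq_sum_eig {r : ℕ} {A : Matrix (Fin r) (Fin r) ℂ} (hA : A.IsHermitian) :
    trace A = ((∑ i, hA.eigenvalues i : ℝ) : ℂ) := by
  conv_lhs => rw [hA.spectral_theorem]
  rw [Unitary.conjStarAlgAut_apply, trace_mul_cycle, Unitary.coe_star_mul_self, one_mul, trace_diagonal]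
  push_cast
  rfl

lemma abs_det_sq_le {r : ℕ} (hr : 0 < r) (B : Matrix (Fin r) (Fin r) ℂ) :
    ‖B.det‖ ^ 2 ≤ (frob B ^ 2 / r) ^ r := by
  have hK : (B * Bᴴ).PosSemidef := posSemidef_self_mul_conjTranspose B
  have hH := hK.isHermitian
  have h1 : ((‖B.det‖ ^ 2 : ℝ) : ℂ) = (B * Bᴴ).det := by
    rw [det_mul, det_conjTranspose]
    have := Complex.mul_conj B.det
    rw [Complex.normSq_eq_norm_sq] at this
    exact_mod_cast this.symm
  rw [hH.det_eq_prod_eigenvalues] at h1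
  have h1' : ‖B.det‖ ^ 2 = ∏ i, hH.eigenvalues i := by
    exact Complex.ofReal_inj.mp (h1.trans (Complex.ofReal_prod Finset.univ _).symm)
  have h2 : ∑ i, hH.eigenvalues i = frob B ^ 2 := by
    have := (trace_eq_sum_eig hH).symm.trans (trace_mul_conjTranspose B)
    exact_mod_cast this
  rw [h1', ← h2]
  exact amgm _ hK.eigenvalues_nonneg hr

lemma frob_inv_le {r : ℕ} {P : Matrix (Fin r) (Fin r) ℂ} (hP : P.PosSemidef) :
    frob (1 + P)⁻¹ ≤ Real.sqrt r := by
  have hM : (1 + P).PosDef := Matrix.PosDef.add_posSemidef Matrix.PosDef.one hP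
  set N := (1 + P)⁻¹ with hNdef
  have hNps : N.PosSemidef := hM.posSemidef.inv
  have hNh : N.IsHermitian := hNps.isHermitian
  have hdet : IsUnit (1 + P).det := hM.det_pos.ne'.isUnit
  have hMN : (1 + P) * N = 1 := mul_nonsing_inv _ hdet
  have hNM : N * (1 + P) = 1 := nonsing_inv_mul _ hdet
  have key : Nᴴ * ((1 + P) * (1 + P) - 1) * N = 1 - N * N := by
    rw [hNh]
    rw [mul_sub, sub_mul, mul_one]
    congr 1
    calc N * ((1 + P) * (1 + P)) * N = (N * (1 + P)) * ((1 + P) * N) := by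
          noncomm_ring
      _ = 1 := by rw [hNM, hMN, one_mul]
  have hpos : ((1 + P) * (1 + P) - 1).PosSemidef := by
    have he : (1 + P) * (1 + P) - 1 = Pᴴ * P + (P + P) := by
      rw [hP.isHermitian.eq]
      noncomm_ring
    rw [he]
    exact (posSemidef_conjTranspose_mul_self P).add (hP.add hP)
  have hS : (1 - N * N).PosSemidef := key ▸ hpos.conjTranspose_mul_mul_same N
  have htr : trace (1 - N * N) = ((↑r - frob N ^ 2 : ℝ) : ℂ) := by
    rw [trace_sub, trace_one]
    have : N * N = N * Nᴴ := by rw [hNh]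
    rw [this, trace_mul_conjTranspose]
    push_cast
    simp
  have htr' := trace_eq_sum_eig hS.isHermitian
  have hge : (0:ℝ) ≤ ↑r - frob N ^ 2 := by
    have h0 : ((↑r - frob N ^ 2 : ℝ) : ℂ) = ((∑ i, hS.isHermitian.eigenvalues i : ℝ) : ℂ) :=
      htr ▸ htr'
    have heq : (↑r - frob N ^ 2 : ℝ) = ∑ i, hS.isHermitian.eigenvalues i :=
      Complex.ofReal_inj.mp h0
    rw [heq]
    exact Finset.sum_nonneg fun i _ => hS.eigenvalues_nonneg i
  have hle : frob N ^ 2 ≤ (r : ℝ) := by linarith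
  calc frob N = Real.sqrt (frob N ^ 2) := (Real.sqrt_sq (frob_nonneg N)).symm
    _ ≤ Real.sqrt r := Real.sqrt_le_sqrt hle

/-- `det(I + HᴴQ′H) ≤ det(I + HᴴQH) · (1 + √r ‖Q′−Q‖_F ‖H‖_F²)^r` for positive
semidefinite `Q, Q′`. -/
theorem det_one_add_le {t r : ℕ}
    (Q Q' : Matrix (Fin t) (Fin t) ℂ) (hQ : Q.PosSemidef) (hQ' : Q'.PosSemidef)
    (H : Matrix (Fin t) (Fin r) ℂ) :
    (((1 : Matrix (Fin r) (Fin r) ℂ) + Hᴴ * Q' * H).det).re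
      ≤ (((1 : Matrix (Fin r) (Fin r) ℂ) + Hᴴ * Q * H).det).re *
          (1 + Real.sqrt r * frob (Q' - Q) * frob H ^ 2) ^ r := by
  rcases Nat.eq_zero_or_pos r with hr | hr
  · subst hr
    simp [Matrix.det_fin_zero]
  · have hP : (Hᴴ * Q * H).PosSemidef := hQ.conjTranspose_mul_mul_same H
    have hP' : (Hᴴ * Q' * H).PosSemidef := hQ'.conjTranspose_mul_mul_same H
    set P := Hᴴ * Q * H with hPdef
    set P' := Hᴴ * Q' * H with hP'def
    have hM : (1 + P).PosDef := Matrix.PosDef.add_posSemidef Matrix.PosDef.one hP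
    have hM' : (1 + P').PosDef := Matrix.PosDef.add_posSemidef Matrix.PosDef.one hP'
    have hdet : IsUnit (1 + P).det := hM.det_pos.ne'.isUnit
    set F := Hᴴ * (Q' - Q) * H with hFdef
    have hFP : F = P' - P := by
      rw [hFdef, hPdef, hP'def, Matrix.mul_sub, Matrix.sub_mul]
    set C := (1 + P)⁻¹ * F with hCdef
    have hfact : (1 : Matrix (Fin r) (Fin r) ℂ) + P' = (1 + P) * (1 + C) := by
      rw [hCdef, hFP, mul_add, mul_one, ← mul_assoc, mul_nonsing_inv _ hdet, one_mul]
      noncomm_ring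
    have hdetfact : ((1 : Matrix (Fin r) (Fin r) ℂ) + P').det
        = (1 + P).det * (1 + C).det := by rw [hfact, det_mul]
    obtain ⟨hre, him⟩ := Complex.lt_def.mp hM.det_pos
    rw [Complex.zero_re] at hre
    rw [Complex.zero_im] at him
    have hsplit : (((1 : Matrix (Fin r) (Fin r) ℂ) + P').det).re
        = ((1 + P).det).re * ((1 + C).det).re := by
      rw [hdetfact, Complex.mul_re, ← him]
      ring
    rw [hsplit]
    -- now bound ((1 + C).det).re
    have hs : (0:ℝ) < Real.sqrt r := Real.sqrt_pos.mpr (by exact_mod_cast hr)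
    set c := frob C with hc
    have hcn : 0 ≤ c := frob_nonneg C
    -- step 1: |det (1+C)| ≤ (1 + c / √r)^r
    have habs : ‖(1 + C).det‖ ≤ (1 + c / Real.sqrt r) ^ r := by
      have h2 := abs_det_sq_le hr (1 + C)
      have hfr : frob (1 + C) ≤ Real.sqrt r + c :=
        (frob_add_le 1 C).trans_eq (by rw [frob_one])
      have hbase : frob (1 + C) ^ 2 / r ≤ (1 + c / Real.sqrt r) ^ 2 := by
        have h3 : frob (1 + C) ^ 2 ≤ (Real.sqrt r + c) ^ 2 :=
          pow_le_pow_left₀ (frob_nonneg _) hfr 2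
        have h4 : (Real.sqrt r + c) ^ 2 / r = (1 + c / Real.sqrt r) ^ 2 := by
          have hr' : (r : ℝ) = Real.sqrt r ^ 2 := (Real.sq_sqrt (by positivity)).symm
          rw [hr', ← div_pow]
          congr 1
          field_simp
          exact Real.sqrt_sq (Real.sqrt_nonneg _)
        rw [← h4]
        exact div_le_div_of_nonneg_right h3 (by positivity) |>.trans_eq rfl
      have h5 : ‖(1 + C).det‖ ^ 2 ≤ ((1 + c / Real.sqrt r) ^ r) ^ 2 := by
        calc ‖(1 + C).det‖ ^ 2 ≤ (frob (1 + C) ^ 2 / r) ^ r := h2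
          _ ≤ ((1 + c / Real.sqrt r) ^ 2) ^ r := by
              refine pow_le_pow_left₀ ?_ hbase r
              positivity
          _ = ((1 + c / Real.sqrt r) ^ r) ^ 2 := by rw [← pow_mul, ← pow_mul, Nat.mul_comm]
      have := Real.sqrt_le_sqrt h5
      rwa [Real.sqrt_sq (norm_nonneg _), Real.sqrt_sq (by positivity)] at this
    -- step 2: c / √r ≤ frob (Q' - Q) * frob H ^ 2
    have hcs : c / Real.sqrt r ≤ frob (Q' - Q) * frob H ^ 2 := by
      have h6 : c ≤ Real.sqrt r * frob F := by
        calc c ≤ frob (1 + P)⁻¹ * frob F := frob_mul_le _ _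
          _ ≤ Real.sqrt r * frob F :=
            mul_le_mul_of_nonneg_right (frob_inv_le hP) (frob_nonneg F)
      have h7 : frob F ≤ frob (Q' - Q) * frob H ^ 2 := by
        calc frob F ≤ frob (Hᴴ * (Q' - Q)) * frob H := frob_mul_le _ _
          _ ≤ (frob Hᴴ * frob (Q' - Q)) * frob H :=
            mul_le_mul_of_nonneg_right (frob_mul_le _ _) (frob_nonneg H)
          _ = frob (Q' - Q) * frob H ^ 2 := by rw [frob_conjTranspose]; ring
      rw [div_le_iff₀ hs]
      calc c ≤ Real.sqrt r * frob F := h6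
        _ ≤ Real.sqrt r * (frob (Q' - Q) * frob H ^ 2) :=
          mul_le_mul_of_nonneg_left h7 (le_of_lt hs)
        _ = frob (Q' - Q) * frob H ^ 2 * Real.sqrt r := by ring
    -- step 3: combine
    have hsr : (1:ℝ) ≤ Real.sqrt r := by
      rw [show (1:ℝ) = Real.sqrt 1 by simp]
      exact Real.sqrt_le_sqrt (by exact_mod_cast hr)
    have hfinal : ‖(1 + C).det‖
        ≤ (1 + Real.sqrt r * frob (Q' - Q) * frob H ^ 2) ^ r := by
      refine habs.trans (pow_le_pow_left₀
        (add_nonneg zero_le_one (div_nonneg hcn hs.le)) ?_ r)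
      have : frob (Q' - Q) * frob H ^ 2 ≤ Real.sqrt r * frob (Q' - Q) * frob H ^ 2 := by
        have hn : 0 ≤ frob (Q' - Q) * frob H ^ 2 :=
          mul_nonneg (frob_nonneg _) (pow_nonneg (frob_nonneg _) 2)
        nlinarith
      linarith [hcs]
    have hred : ((1 + C).det).re ≤ (1 + Real.sqrt r * frob (Q' - Q) * frob H ^ 2) ^ r :=
      (Complex.re_le_norm _).trans hfinal
    exact mul_le_mul_of_nonneg_left hred (le_of_lt hre)
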